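/- Let p > 1 be a real number, d, i, t, c ≥ 1 and D ≥ 0 integers, and n = c + D. Let T be a real number with T > 0, p^{id+D} T^{d+i−t} < 1 and p^{id+n} T^{d+i} < 1. Then the series ∑_{r=1}^∞ p^{idr} T^{(d+i)r} ∑_{b ∈ {1,…,r}^n} μ_p(r; b) · ( T^{−t·min{r, b_1, …, b_c}} − 1 ) converges and its sum equals p^{di} T^{d+i−t} (1 − T^t) / ( (1 − p^{id+D} T^{d+i−t}) (1 − p^{di+n} T^{d+i}) ). (Here the minimum is taken over r and only the first c of the n coordinates of b. With d = 4, i ∈ {1,2,3}, t = 2 for i = 1 and t = 1 for i = 2,3, this gives the exceptional factor A_{i*} − A_i of the normal zeta function of F_{2,4}.) -/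

import Mathlib

open Finset

noncomputable section

/-- `μ_p(a,b)`: the measure of elements of `pℤ_p/(p^a)` of valuation `b` (for `1 ≤ b ≤ a`). -/
def mu (p : ℝ) (a b : ℕ) : ℝ := if b = a then 1 else p ^ (a - b) * (1 - p⁻¹)

/-- `μ_p(a; b) = ∏_j μ_p(a, b_j)` for a tuple `b`. -/
def muV (p : ℝ) (a : ℕ) {k : ℕ} (b : Fin k → ℕ) : ℝ := ∏ j, mu p a (b j)

/-- `mins r f = min{r, f 0, …, f (k-1)}`. -/
def mins (r : ℕ) {k : ℕ} (f : Fin k → ℕ) : ℕ := (List.ofFn f).foldr min r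

/-- The exceptional factor as a sum: with `n = c + D`,
`Σ_{r≥1} p^{idr} T^{(d+i)r} Σ_{b∈{1,…,r}^n} μ_p(r;b) (T^{-t·min{r,b_1,…,b_c}} − 1)
 = p^{di} T^{d+i−t} (1−T^t) / ((1−p^{id+D}T^{d+i−t})(1−p^{di+n}T^{d+i}))`. -/

lemma sum_mu_aux {p : ℝ} (hp : 1 < p) (r : ℕ) :
    ∀ k, k < r → ∑ b ∈ Icc (r - k) r, mu p r b = p ^ k := by
  have hp0 : p ≠ 0 := ne_of_gt (zero_lt_one.trans hp)
  intro k
  induction k with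
  | zero => intro h; simp [mu, show r - 0 = r by omega]
  | succ k ih =>
    intro hk
    have hset : Icc (r - (k+1)) r = insert (r - (k+1)) (Icc (r - k) r) := by
      ext x; simp only [mem_Icc, mem_insert]; omega
    have hnot : r - (k+1) ∉ Icc (r - k) r := by simp only [mem_Icc]; omega
    rw [hset, Finset.sum_insert hnot, ih (by omega)]
    have hne : r - (k+1) ≠ r := by omega
    have hsub : r - (r - (k+1)) = k + 1 := by omega
    simp only [mu, if_neg hne, hsub]
    field_simp
    ring

lemma sum_mu_Icc {p : ℝ} (hp : 1 < p) {m r : ℕ} (h1 : 1 ≤ m) (hm : m ≤ r) :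
    ∑ b ∈ Icc m r, mu p r b = p ^ (r - m) := by
  have := sum_mu_aux hp r (r - m) (by omega)
  rwa [show r - (r - m) = m by omega] at this

lemma le_foldr_min (x b : ℕ) (l : List ℕ) :
    x ≤ l.foldr min b ↔ x ≤ b ∧ ∀ a ∈ l, x ≤ a := by
  induction l with
  | nil => simp
  | cons h tl ih => simp [le_min_iff, ih]; tauto

lemma le_mins {r x k : ℕ} {f : Fin k → ℕ} : x ≤ mins r f ↔ x ≤ r ∧ ∀ j, x ≤ f j := by
  simp only [mins, le_foldr_min, List.mem_ofFn]
  constructor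
  · rintro ⟨h1, h2⟩; exact ⟨h1, fun j => h2 _ ⟨j, rfl⟩⟩
  · rintro ⟨h1, h2⟩; exact ⟨h1, by rintro a ⟨j, rfl⟩; exact h2 j⟩

lemma mins_le {r k : ℕ} (f : Fin k → ℕ) : mins r f ≤ r := (le_mins.mp le_rfl).1

lemma zpow_helper (T : ℝ) (t M : ℕ) : T ^ (-(t * M : ℤ)) = ((T ^ t)⁻¹) ^ M := by
  rw [zpow_neg, show ((t:ℤ) * (M:ℤ)) = ((t*M : ℕ):ℤ) from by push_cast; ring,
    zpow_natCast, pow_mul, inv_pow]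

lemma innerSumEq (p T : ℝ) (hp : 1 < p) (hT : 0 < T) (t c D k : ℕ) :
    ∑ b ∈ Fintype.piFinset (fun _ : Fin (c + D) => Icc 1 (k+1)),
        muV p (k+1) b * (T ^ (-(t * mins (k+1) (fun j : Fin c => b (Fin.castAdd D j)) : ℤ)) - 1)
    = ∑ m ∈ range (k+1),
        (((T ^ t)⁻¹) ^ (m+1) - ((T ^ t)⁻¹) ^ m) * ((p ^ (k - m)) ^ c * (p ^ k) ^ D) := by
  set A : ℝ := (T ^ t)⁻¹ with hA
  -- step 1: rewrite each term as a sum over m ∈ range (k+1)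
  have step1 : ∀ b ∈ Fintype.piFinset (fun _ : Fin (c + D) => Icc 1 (k+1)),
      muV p (k+1) b * (T ^ (-(t * mins (k+1) (fun j : Fin c => b (Fin.castAdd D j)) : ℤ)) - 1)
      = ∑ m ∈ range (k+1),
          (if m + 1 ≤ mins (k+1) (fun j : Fin c => b (Fin.castAdd D j)) then muV p (k+1) b else 0)
            * (A ^ (m+1) - A ^ m) := by
    intro b hb
    set M := mins (k+1) (fun j : Fin c => b (Fin.castAdd D j)) with hM
    have hMr : M ≤ k + 1 := (le_mins.mp le_rfl).1
    rw [zpow_helper, ← hA]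
    have tele : A ^ M - 1 = ∑ m ∈ range M, (A ^ (m+1) - A ^ m) := by
      rw [Finset.sum_range_sub (fun m => A ^ m), pow_zero]
    rw [tele, Finset.mul_sum]
    have hfilter : (range (k+1)).filter (fun m => m + 1 ≤ M) = range M := by
      ext m; simp only [mem_filter, mem_range]; omega
    calc ∑ m ∈ range M, muV p (k+1) b * (A^(m+1) - A^m)
        = ∑ m ∈ (range (k+1)).filter (fun m => m + 1 ≤ M),
            muV p (k+1) b * (A^(m+1) - A^m) := by rw [hfilter]
      _ = ∑ m ∈ range (k+1),
            (if m + 1 ≤ M then muV p (k+1) b else 0) * (A^(m+1) - A^m) := by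
          rw [Finset.sum_filter]
          exact Finset.sum_congr rfl fun m _ => by split <;> simp
  rw [Finset.sum_congr rfl step1, Finset.sum_comm]
  refine Finset.sum_congr rfl fun m hm => ?_
  have hmk : m < k + 1 := mem_range.mp hm
  rw [← Finset.sum_mul, mul_comm]
  congr 1
  -- ∑ b, ite (...) (muV b) 0 = (p^(k-m))^c * (p^k)^D
  have hfil : ∑ b ∈ Fintype.piFinset (fun _ : Fin (c + D) => Icc 1 (k+1)),
      (if m + 1 ≤ mins (k+1) (fun j : Fin c => b (Fin.castAdd D j)) then muV p (k+1) b else 0)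
      = ∑ b ∈ Fintype.piFinset
          (fun j : Fin (c + D) => if (j : ℕ) < c then Icc (m+1) (k+1) else Icc 1 (k+1)),
          muV p (k+1) b := by
    rw [← Finset.sum_filter]
    apply Finset.sum_congr ?_ (fun _ _ => rfl)
    ext b
    simp only [mem_filter, Fintype.mem_piFinset, mem_Icc, le_mins]
    constructor
    · rintro ⟨h1, h2, h3⟩ j
      by_cases hj : (j : ℕ) < c
      · simp only [hj, if_true, mem_Icc]
        exact ⟨by simpa using h3 ⟨(j : ℕ), hj⟩, (h1 j).2⟩
      · simp only [hj, if_false, mem_Icc]; exact h1 j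
    · intro h
      refine ⟨fun j => ?_, by omega, fun j => ?_⟩
      · by_cases hj : (j : ℕ) < c
        · have := h j; simp only [hj, if_true, mem_Icc] at this; omega
        · have := h j; simp only [hj, if_false, mem_Icc] at this; omega
      · have := h (Fin.castAdd D j)
        simp only [Fin.coe_castAdd, j.isLt, if_true, mem_Icc] at this
        omega
  rw [hfil]
  unfold muV
  rw [← Finset.prod_univ_sum]
  have : ∀ j : Fin (c + D),
      (∑ y ∈ (if (j : ℕ) < c then Icc (m+1) (k+1) else Icc 1 (k+1)), mu p (k+1) y)
      = if (j : ℕ) < c then p ^ (k - m) else p ^ k := by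
    intro j
    by_cases hj : (j : ℕ) < c
    · simp only [hj, if_true]
      rw [sum_mu_Icc hp (by omega) (by omega)]
      congr 1; omega
    · simp only [hj, if_false]
      rw [sum_mu_Icc hp (by omega) (by omega)]
      congr 1
  rw [Finset.prod_congr rfl fun j _ => this j, Fin.prod_univ_add]
  simp [Fin.coe_castAdd, Fin.coe_natAdd]

theorem exceptional_factor_sum (p T : ℝ) (hp : 1 < p) (d i t c D : ℕ)
    (hd : 1 ≤ d) (hi : 1 ≤ i) (ht : 1 ≤ t) (hc : 1 ≤ c) (hT : 0 < T)
    (h1 : p ^ (i * d + D) * T ^ ((d : ℤ) + i - t) < 1)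
    (h2 : p ^ (i * d + (c + D)) * T ^ (d + i) < 1) :
    HasSum (fun k : ℕ =>
        p ^ (i * d * (k + 1)) * T ^ ((d + i) * (k + 1)) *
          ∑ b ∈ Fintype.piFinset (fun _ : Fin (c + D) => Icc 1 (k + 1)),
            muV p (k + 1) b *
              (T ^ (-(t * mins (k + 1) (fun j : Fin c => b (Fin.castAdd D j)) : ℤ)) - 1))
      (p ^ (d * i) * T ^ ((d : ℤ) + i - t) * (1 - T ^ t) /
        ((1 - p ^ (i * d + D) * T ^ ((d : ℤ) + i - t)) *
          (1 - p ^ (d * i + (c + D)) * T ^ (d + i)))) := by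
  have hp0 : (0:ℝ) < p := zero_lt_one.trans hp
  have hT0 : T ≠ 0 := ne_of_gt hT
  set A : ℝ := (T ^ t)⁻¹ with hA
  set α : ℝ := p ^ (i * d + D) * T ^ (d + i) * A with hα
  set β : ℝ := p ^ (i * d + (c + D)) * T ^ (d + i) with hβ
  have hzT : T ^ ((d:ℤ) + i - t) = T ^ (d + i) * A := by
    rw [show ((d:ℤ) + i - t) = ((d + i : ℕ) : ℤ) + (-(t:ℤ)) by push_cast; ring,
      zpow_add₀ hT0, zpow_natCast, zpow_neg, zpow_natCast]
  have hα0 : 0 ≤ α := by rw [hα, hA]; positivity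
  have hβ0 : 0 ≤ β := by rw [hβ]; positivity
  have hα1 : α < 1 := by rw [hα, mul_assoc, ← hzT]; exact h1
  have hβ1 : β < 1 := h2
  have hnα : ‖α‖ < 1 := by rw [Real.norm_eq_abs, abs_of_nonneg hα0]; exact hα1
  have hnβ : ‖β‖ < 1 := by rw [Real.norm_eq_abs, abs_of_nonneg hβ0]; exact hβ1
  have hsα : Summable fun n => ‖α ^ n‖ := by
    simpa [norm_pow] using summable_geometric_of_lt_one (norm_nonneg α) hnα
  have hsβ : Summable fun n => ‖β ^ n‖ := by
    simpa [norm_pow] using summable_geometric_of_lt_one (norm_nonneg β) hnβ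
  set C : ℝ := p ^ (i * d) * T ^ (d + i) * (A - 1) with hC
  have key : (fun k : ℕ =>
        p ^ (i * d * (k + 1)) * T ^ ((d + i) * (k + 1)) *
          ∑ b ∈ Fintype.piFinset (fun _ : Fin (c + D) => Icc 1 (k + 1)),
            muV p (k + 1) b *
              (T ^ (-(t * mins (k + 1) (fun j : Fin c => b (Fin.castAdd D j)) : ℤ)) - 1))
      = fun k : ℕ => C * ∑ m ∈ range (k+1), α ^ m * β ^ (k - m) := by
    funext k
    rw [innerSumEq p T hp hT t c D k, Finset.mul_sum, Finset.mul_sum]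
    refine Finset.sum_congr rfl fun m hm => ?_
    have hmk : m ≤ k := Nat.lt_succ_iff.mp (mem_range.mp hm)
    obtain ⟨l, rfl⟩ := Nat.exists_eq_add_of_le hmk
    rw [show m + l - m = l by omega, hα, hβ, hC, hA]
    ring
  rw [key]
  have H := hasSum_sum_range_mul_of_summable_norm hsα hsβ
  rw [tsum_geometric_of_lt_one hα0 hα1, tsum_geometric_of_lt_one hβ0 hβ1] at H
  have H2 := H.mul_left C
  convert H2 using 1
  · rfl
  rw [hzT, show d * i = i * d from mul_comm d i]
  have hu : (1:ℝ) - α ≠ 0 := by linarith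
  have hv : (1:ℝ) - β ≠ 0 := by linarith
  rw [hα, hβ, hC, hA] at *
  have htt : (T:ℝ) ^ t ≠ 0 := pow_ne_zero _ hT0
  field_simp
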